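/- For any group G and any subgroup H, the map D_H : H/[H,H] → Z[G]·I(H) / I(G)·I(H) given by h[H,H] ↦ h − 1 + I(G)I(H) is a well-defined isomorphism of abelian groups. -/

import Mathlib

open MonoidAlgebra

/-- The ℤ-submodule of `ℤ[G]` generated by the elements `h - 1`, `h ∈ H`. -/
noncomputable def relAug (G : Type*) [Group G] (H : Subgroup G) :
    Submodule ℤ (MonoidAlgebra ℤ G) :=
  Submodule.span ℤ {x | ∃ h ∈ H, x = MonoidAlgebra.of ℤ G h - 1}

/-- The augmentation ideal `I(G)` of `ℤ[G]`, as a ℤ-submodule. -/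
noncomputable def augI (G : Type*) [Group G] : Submodule ℤ (MonoidAlgebra ℤ G) :=
  Submodule.span ℤ {x | ∃ g : G, x = MonoidAlgebra.of ℤ G g - 1}

/-- The left ideal `ℤ[G]·I(H)`: the additive subgroup generated by `g·(h−1)`. -/
noncomputable def ZIH (G : Type*) [Group G] (H : Subgroup G) :
    Submodule ℤ (MonoidAlgebra ℤ G) :=
  Submodule.span ℤ
    {x | ∃ (g : G) (h : G), h ∈ H ∧
      x = MonoidAlgebra.of ℤ G g * (MonoidAlgebra.of ℤ G h - 1)}

section Aux

variable {G : Type*} [Group G] (H : Subgroup G)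

/-- For `g : G`, the element of `H` obtained by translating `g` by the chosen
coset representative of `gH`. -/
noncomputable def whSig (g : G) : H :=
  ⟨(Quotient.out (QuotientGroup.mk g : G ⧸ H))⁻¹ * g, by
    rw [← QuotientGroup.eq]
    exact QuotientGroup.out_eq' _⟩

lemma whSig_mul (g h : G) (hh : h ∈ H) :
    whSig H (g * h) = whSig H g * ⟨h, hh⟩ := by
  apply Subtype.ext
  simp only [whSig, Subgroup.coe_mul, Subgroup.coe_mk]
  rw [QuotientGroup.mk_mul_of_mem g hh, mul_assoc]

/-- The function `G → H^{ab}` (written additively), `g ↦ [whSig g]`. -/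
noncomputable def whF (g : G) : Additive (Abelianization H) :=
  Additive.ofMul (Abelianization.of (whSig H g))

lemma whF_mul (g h : G) (hh : h ∈ H) :
    whF H (g * h) = whF H g + Additive.ofMul (Abelianization.of ⟨h, hh⟩) := by
  simp only [whF, whSig_mul H g h hh, map_mul]
  rfl

/-- The ℤ-linear map `ℤ[G] → H^{ab}` induced by `whF`. -/
noncomputable def whTheta : MonoidAlgebra ℤ G →ₗ[ℤ] Additive (Abelianization H) :=
  Finsupp.lift (Additive (Abelianization H)) ℤ G (whF H) ∘ₗ
    (MonoidAlgebra.coeffLinearEquiv ℤ).toLinearMap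

lemma whTheta_of (g : G) : whTheta H (MonoidAlgebra.of ℤ G g) = whF H g := by
  rw [whTheta, MonoidAlgebra.of_apply]
  erw [Finsupp.lift_apply]
  simp

lemma whTheta_gen (g h : G) (hh : h ∈ H) :
    whTheta H (MonoidAlgebra.of ℤ G g * (MonoidAlgebra.of ℤ G h - 1)) =
      Additive.ofMul (Abelianization.of ⟨h, hh⟩) := by
  have : MonoidAlgebra.of ℤ G g * (MonoidAlgebra.of ℤ G h - 1) =
      MonoidAlgebra.of ℤ G (g * h) - MonoidAlgebra.of ℤ G g := by
    rw [mul_sub, mul_one, ← map_mul]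
  rw [this, map_sub, whTheta_of, whTheta_of, whF_mul H g h hh]
  abel

lemma whTheta_prod (g h : G) (hh : h ∈ H) :
    whTheta H ((MonoidAlgebra.of ℤ G g - 1) * (MonoidAlgebra.of ℤ G h - 1)) = 0 := by
  have : (MonoidAlgebra.of ℤ G g - 1) * (MonoidAlgebra.of ℤ G h - 1) =
      MonoidAlgebra.of ℤ G g * (MonoidAlgebra.of ℤ G h - 1) -
        MonoidAlgebra.of ℤ G 1 * (MonoidAlgebra.of ℤ G h - 1) := by
    rw [map_one, sub_mul]
  rw [this, map_sub, whTheta_gen H g h hh, whTheta_gen H 1 h hh, sub_self]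

lemma wh_mem_ZIH (h : G) (hh : h ∈ H) :
    MonoidAlgebra.of ℤ G h - 1 ∈ ZIH G H := by
  apply Submodule.subset_span
  exact ⟨1, h, hh, by rw [map_one, one_mul]⟩

lemma wh_gen_mem_augI (g : G) : MonoidAlgebra.of ℤ G g - 1 ∈ augI G :=
  Submodule.subset_span ⟨g, rfl⟩

lemma wh_gen_mem_relAug (h : G) (hh : h ∈ H) :
    MonoidAlgebra.of ℤ G h - 1 ∈ relAug G H :=
  Submodule.subset_span ⟨h, hh, rfl⟩

lemma wh_prod_le_ker :
    augI G * relAug G H ≤ LinearMap.ker (whTheta H) := by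
  rw [augI, relAug, Submodule.span_mul_span, Submodule.span_le]
  rintro z ⟨x, ⟨g, rfl⟩, y, ⟨h, hh, rfl⟩, rfl⟩
  exact whTheta_prod H g h hh

/-- `whTheta` restricted to `ZIH`. -/
noncomputable def whTheta' : ↥(ZIH G H) →ₗ[ℤ] Additive (Abelianization H) :=
  (whTheta H).comp (ZIH G H).subtype

lemma wh_ker :
    (augI G * relAug G H).comap (ZIH G H).subtype ≤ LinearMap.ker (whTheta' H) := by
  rintro ⟨x, hx⟩ hmem
  exact wh_prod_le_ker H hmem

/-- The induced map on the quotient. -/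
noncomputable def whThetaBar :
    (↥(ZIH G H) ⧸ (augI G * relAug G H).comap (ZIH G H).subtype) →ₗ[ℤ]
      Additive (Abelianization H) :=
  Submodule.liftQ _ (whTheta' H) (wh_ker H)

/-- The forward monoid hom `H →* Multiplicative (quotient)`. -/
noncomputable def whPhi0 :
    H →* Multiplicative
      (↥(ZIH G H) ⧸ (augI G * relAug G H).comap (ZIH G H).subtype) where
  toFun h := Multiplicative.ofAdd (Submodule.Quotient.mk
    (⟨MonoidAlgebra.of ℤ G (h : G) - 1, wh_mem_ZIH H _ h.2⟩ : ↥(ZIH G H)))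
  map_one' := by
    have h0 : (⟨MonoidAlgebra.of ℤ G ((1 : H) : G) - 1, wh_mem_ZIH H _ (1 : H).2⟩ :
        ↥(ZIH G H)) = 0 := by
      apply Subtype.ext
      show MonoidAlgebra.of ℤ G ((1 : H) : G) - 1 = (0 : MonoidAlgebra ℤ G)
      rw [OneMemClass.coe_one, map_one, sub_self]
    rw [h0, Submodule.Quotient.mk_zero]
    rfl
  map_mul' h₁ h₂ := by
    rw [← ofAdd_add, Equiv.apply_eq_iff_eq, ← Submodule.Quotient.mk_add,
      Submodule.Quotient.eq]
    refine Submodule.mem_comap.mpr ?_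
    have : ((⟨MonoidAlgebra.of ℤ G ((h₁ * h₂ : H) : G) - 1, wh_mem_ZIH H _ (h₁ * h₂).2⟩ :
        ↥(ZIH G H)) -
        (⟨MonoidAlgebra.of ℤ G ((h₁ : H) : G) - 1, wh_mem_ZIH H _ h₁.2⟩ +
         ⟨MonoidAlgebra.of ℤ G ((h₂ : H) : G) - 1, wh_mem_ZIH H _ h₂.2⟩) : ↥(ZIH G H)) =
        ⟨(MonoidAlgebra.of ℤ G (h₁ : G) - 1) * (MonoidAlgebra.of ℤ G (h₂ : G) - 1), by
          have hm : MonoidAlgebra.of ℤ G ((h₁ * h₂ : H) : G) =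
              MonoidAlgebra.of ℤ G (h₁ : G) * MonoidAlgebra.of ℤ G (h₂ : G) := by
            rw [← map_mul]; rfl
          have : (MonoidAlgebra.of ℤ G (h₁ : G) - 1) * (MonoidAlgebra.of ℤ G (h₂ : G) - 1) =
              (MonoidAlgebra.of ℤ G ((h₁ * h₂ : H) : G) - 1) -
              ((MonoidAlgebra.of ℤ G ((h₁ : H) : G) - 1) +
               (MonoidAlgebra.of ℤ G ((h₂ : H) : G) - 1)) := by
            rw [hm]; noncomm_ring
          rw [this]
          exact sub_mem (wh_mem_ZIH H _ (h₁ * h₂).2)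
            (add_mem (wh_mem_ZIH H _ h₁.2) (wh_mem_ZIH H _ h₂.2))⟩ := by
      apply Subtype.ext
      show (MonoidAlgebra.of ℤ G ((h₁ * h₂ : H) : G) - 1) -
          ((MonoidAlgebra.of ℤ G ((h₁ : H) : G) - 1) +
           (MonoidAlgebra.of ℤ G ((h₂ : H) : G) - 1)) =
          (MonoidAlgebra.of ℤ G (h₁ : G) - 1) * (MonoidAlgebra.of ℤ G (h₂ : G) - 1)
      have hm : MonoidAlgebra.of ℤ G ((h₁ * h₂ : H) : G) =
          MonoidAlgebra.of ℤ G (h₁ : G) * MonoidAlgebra.of ℤ G (h₂ : G) := by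
        rw [← map_mul]; rfl
      rw [hm]; noncomm_ring
    rw [this]
    exact Submodule.mul_mem_mul (wh_gen_mem_augI (G := G) (h₁ : G))
      (wh_gen_mem_relAug H (h₂ : G) h₂.2)

/-- The forward map `H^{ab} → quotient` as an additive hom. -/
noncomputable def whPsi :
    Additive (Abelianization H) →+
      (↥(ZIH G H) ⧸ (augI G * relAug G H).comap (ZIH G H).subtype) where
  toFun a := Multiplicative.toAdd ((Abelianization.lift (whPhi0 H)) (Additive.toMul a))
  map_zero' := by simp
  map_add' a b := by simp

lemma whPsi_of (h : H) :
    whPsi H (Additive.ofMul (Abelianization.of h)) =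
      Submodule.Quotient.mk
        (⟨MonoidAlgebra.of ℤ G (h : G) - 1, wh_mem_ZIH H _ h.2⟩ : ↥(ZIH G H)) := by
  show Multiplicative.toAdd ((Abelianization.lift (whPhi0 H)) (Abelianization.of h)) = _
  rw [Abelianization.lift_apply_of]
  rfl

lemma whPsi_theta (x : MonoidAlgebra ℤ G) (hx : x ∈ ZIH G H) :
    whPsi H (whTheta H x) = Submodule.Quotient.mk (⟨x, hx⟩ : ↥(ZIH G H)) := by
  induction hx using Submodule.span_induction with
  | mem z hz =>
    obtain ⟨g, h, hh, rfl⟩ := hz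
    rw [whTheta_gen H g h hh, whPsi_of H ⟨h, hh⟩]
    rw [Submodule.Quotient.eq]
    refine Submodule.mem_comap.mpr ?_
    have : ((⟨MonoidAlgebra.of ℤ G h - 1, wh_mem_ZIH H _ hh⟩ : ↥(ZIH G H)) -
        ⟨MonoidAlgebra.of ℤ G g * (MonoidAlgebra.of ℤ G h - 1),
          Submodule.subset_span ⟨g, h, hh, rfl⟩⟩ : ↥(ZIH G H)) =
        ⟨-((MonoidAlgebra.of ℤ G g - 1) * (MonoidAlgebra.of ℤ G h - 1)), by
          have : -((MonoidAlgebra.of ℤ G g - 1) * (MonoidAlgebra.of ℤ G h - 1)) =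
              (MonoidAlgebra.of ℤ G h - 1) -
              MonoidAlgebra.of ℤ G g * (MonoidAlgebra.of ℤ G h - 1) := by noncomm_ring
          rw [this]
          exact sub_mem (wh_mem_ZIH H _ hh) (Submodule.subset_span ⟨g, h, hh, rfl⟩)⟩ := by
      apply Subtype.ext
      show (MonoidAlgebra.of ℤ G h - 1) -
          MonoidAlgebra.of ℤ G g * (MonoidAlgebra.of ℤ G h - 1) =
          -((MonoidAlgebra.of ℤ G g - 1) * (MonoidAlgebra.of ℤ G h - 1))
      noncomm_ring
    rw [this]
    exact neg_mem (Submodule.mul_mem_mul (wh_gen_mem_augI (G := G) g)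
      (wh_gen_mem_relAug H h hh))
  | zero =>
    have : (⟨(0 : MonoidAlgebra ℤ G), Submodule.zero_mem _⟩ : ↥(ZIH G H)) = 0 := rfl
    rw [map_zero, map_zero, this, Submodule.Quotient.mk_zero]
  | add x y hxm hym hx hy =>
    have : (⟨x + y, add_mem hxm hym⟩ : ↥(ZIH G H)) =
        ⟨x, hxm⟩ + ⟨y, hym⟩ := rfl
    rw [map_add, map_add, hx, hy, this, Submodule.Quotient.mk_add]
  | smul a x hxm hx =>
    have : (⟨a • x, Submodule.smul_mem _ a hxm⟩ : ↥(ZIH G H)) =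
        a • (⟨x, hxm⟩ : ↥(ZIH G H)) := rfl
    rw [map_smul, map_zsmul, hx, this, Submodule.Quotient.mk_smul]

lemma whTheta_psi (a : Additive (Abelianization H)) :
    whThetaBar H (whPsi H a) = a := by
  obtain ⟨h, rfl⟩ : ∃ h : H, Additive.ofMul (Abelianization.of h) = a := by
    obtain ⟨h, hh⟩ := (Quotient.exists_rep (Additive.toMul a))
    exact ⟨h, congrArg Additive.ofMul hh⟩
  rw [whPsi_of]
  show whTheta' H _ = _
  show whTheta H (MonoidAlgebra.of ℤ G (h : G) - 1) = _
  rw [map_sub, whTheta_of]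
  have h1 : (1 : MonoidAlgebra ℤ G) = MonoidAlgebra.of ℤ G 1 := by rw [map_one]
  rw [h1, whTheta_of]
  have := whF_mul H 1 (h : G) h.2
  rw [one_mul] at this
  rw [this]
  have : (⟨(h : G), h.2⟩ : H) = h := rfl
  rw [this]
  abel

end Aux

/-- Whitcomb's isomorphism: for any subgroup `H ≤ G`, the map
`D_H : H/[H,H] → ℤ[G]I(H)/I(G)I(H)`, `h[H,H] ↦ h − 1 + I(G)I(H)`, is a well-defined
isomorphism of abelian groups. -/
theorem stmt15 (G : Type*) [Group G] (H : Subgroup G) :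
    ∃ e : Additive (Abelianization H) ≃+
        (↥(ZIH G H) ⧸ (augI G * relAug G H).comap (ZIH G H).subtype),
      ∀ (h : H) (hm : MonoidAlgebra.of ℤ G (h : G) - 1 ∈ ZIH G H),
        e (Additive.ofMul (Abelianization.of h)) =
          Submodule.Quotient.mk (⟨MonoidAlgebra.of ℤ G (h : G) - 1, hm⟩ : ↥(ZIH G H)) := by
  refine ⟨{ toFun := whPsi H, invFun := whThetaBar H,
            left_inv := whTheta_psi H,
            right_inv := ?_,
            map_add' := (whPsi H).map_add }, ?_⟩
  · intro q
    obtain ⟨⟨x, hx⟩, rfl⟩ := Submodule.Quotient.mk_surjective _ q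
    have : whThetaBar H (Submodule.Quotient.mk (⟨x, hx⟩ : ↥(ZIH G H))) =
        whTheta H x := rfl
    rw [this, whPsi_theta H x hx]
  · intro h hm
    exact whPsi_of H h
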